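/- For all n ∈ ℕ and all states (v1, v2), the forward difference in the monitor age is bounded: V_n(v1+1, v2) − V_n(v1, v2) ≤ 1/(1−α) + 1/(1−α(1−q)). -/

import Mathlib

/-- Value-iteration iterates for the sampling CMDP.  States are `(v1, v2)` with
`v2 : Option ℕ` (`none` meaning the transmitter holds no packet, `v2 = ∞`). -/
noncomputable def V (α q lam : ℝ) : ℕ → ℕ → Option ℕ → ℝ
  | 0, _, _ => 0
  | n + 1, v1, v2 =>
      (v1 : ℝ) +
        min
          (lam + α * ((1 - q) * V α q lam n (v1 + 1) (some 1) +
            q * V α q lam n 1 none))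
          (match v2 with
            | some w => α * ((1 - q) * V α q lam n (v1 + 1) (some (w + 1)) +
                q * V α q lam n (w + 1) none)
            | none => α * V α q lam n (v1 + 1) none)

/-- Uniform bound on the forward difference of the iterates in the monitor
age: `V_n(v1+1, v2) − V_n(v1, v2) ≤ 1/(1−α) + 1/(1−α(1−q))`. -/
theorem V_increment_bounded (α q lam : ℝ) (hα0 : 0 < α) (hα1 : α < 1)
    (hq0 : 0 < q) (hq1 : q ≤ 1) (hlam : 0 ≤ lam) :
    ∀ n : ℕ, ∀ v1 : ℕ, 1 ≤ v1 → ∀ v2 : Option ℕ,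
      (∀ w, v2 = some w → 1 ≤ w ∧ w ≤ v1) →
      V α q lam n (v1 + 1) v2 - V α q lam n v1 v2 ≤
        1 / (1 - α) + 1 / (1 - α * (1 - q)) := by
  have h1 : (0:ℝ) < 1 - α := by linarith
  have h2 : (0:ℝ) < 1 - α * (1 - q) := by nlinarith
  set D : ℝ := 1 / (1 - α) + 1 / (1 - α * (1 - q)) with hDdef
  have hD : 0 ≤ D := by positivity
  have hkey : 1 + α * D ≤ D := by
    have hmul : (1 - α) * D = 1 + (1 - α) / (1 - α * (1 - q)) := by
      rw [hDdef]; field_simp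
    have hge : (0:ℝ) ≤ (1 - α) / (1 - α * (1 - q)) :=
      div_nonneg h1.le h2.le
    have h3 : (1:ℝ) ≤ (1 - α) * D := by rw [hmul]; linarith
    linarith [h3]
  intro n
  induction n with
  | zero => intro v1 _ v2 _; simpa [V] using hD
  | succ n ih =>
    intro v1 hv1 v2 hv2
    set A : ℝ := lam + α * ((1 - q) * V α q lam n (v1 + 1) (some 1) +
        q * V α q lam n 1 none) with hAdef
    set A' : ℝ := lam + α * ((1 - q) * V α q lam n (v1 + 1 + 1) (some 1) +
        q * V α q lam n 1 none) with hA'def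
    have hA : A' ≤ A + α * D := by
      have h := ih (v1 + 1) (by omega) (some 1) (by intro w hw; simp at hw; omega)
      rw [hAdef, hA'def]
      nlinarith [mul_le_mul_of_nonneg_left h (mul_nonneg hα0.le (by linarith) : (0:ℝ) ≤ α * (1 - q)),
        mul_nonneg hα0.le hD, mul_nonneg (mul_nonneg hα0.le hq0.le) hD]
    cases v2 with
    | none =>
      have hB : α * V α q lam n (v1 + 1 + 1) none ≤
          α * V α q lam n (v1 + 1) none + α * D := by
        have h := ih (v1 + 1) (by omega) none (by intro w hw; simp at hw)
        nlinarith [mul_le_mul_of_nonneg_left h hα0.le]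
      have hmin : min A' (α * V α q lam n (v1 + 1 + 1) none) ≤
          min A (α * V α q lam n (v1 + 1) none) + α * D := by
        rcases le_total A (α * V α q lam n (v1 + 1) none) with h | h
        · calc min A' _ ≤ A' := min_le_left _ _
            _ ≤ A + α * D := hA
            _ = min A _ + α * D := by rw [min_eq_left h]
        · calc min A' _ ≤ _ := min_le_right _ _
            _ ≤ α * V α q lam n (v1 + 1) none + α * D := hB
            _ = min A _ + α * D := by rw [min_eq_right h]
      simp only [V]
      push_cast
      linarith [hmin]
    | some w =>
      obtain ⟨hw1, hw2⟩ := hv2 w rfl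
      set B : ℝ := α * ((1 - q) * V α q lam n (v1 + 1) (some (w + 1)) +
          q * V α q lam n (w + 1) none) with hBdef
      set B' : ℝ := α * ((1 - q) * V α q lam n (v1 + 1 + 1) (some (w + 1)) +
          q * V α q lam n (w + 1) none) with hB'def
      have hB : B' ≤ B + α * D := by
        have h := ih (v1 + 1) (by omega) (some (w + 1))
          (by intro u hu; simp at hu; omega)
        rw [hBdef, hB'def]
        nlinarith [mul_le_mul_of_nonneg_left h (mul_nonneg hα0.le (by linarith) : (0:ℝ) ≤ α * (1 - q)),
          mul_nonneg hα0.le hD, mul_nonneg (mul_nonneg hα0.le hq0.le) hD]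
      have hmin : min A' B' ≤ min A B + α * D := by
        rcases le_total A B with h | h
        · calc min A' B' ≤ A' := min_le_left _ _
            _ ≤ A + α * D := hA
            _ = min A B + α * D := by rw [min_eq_left h]
        · calc min A' B' ≤ B' := min_le_right _ _
            _ ≤ B + α * D := hB
            _ = min A B + α * D := by rw [min_eq_right h]
      simp only [V]
      push_cast
      linarith [hmin]
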